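/- Let G be an Abelian group and A, B finite nonempty subsets with |A+B| ≤ K|B|. Then there is a nonempty subset X ⊆ B such that |nA + X| ≤ K^n |X| for all natural numbers n ≥ 1, where nA denotes the n-fold sumset A+⋯+A. -/

import Mathlib

open Pointwise Finset

theorem petridis_corollary {G : Type*} [AddCommGroup G] [DecidableEq G]
    (A B : Finset G) (hA : A.Nonempty) (hB : B.Nonempty) (K : ℝ) (hK : 0 < K)
    (h : ((A + B).card : ℝ) ≤ K * B.card) :
    ∃ X ⊆ B, X.Nonempty ∧ ∀ n : ℕ, 1 ≤ n →
      ((n • A + X).card : ℝ) ≤ K ^ n * X.card := by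
  have hB' : B ∈ B.powerset.erase ∅ :=
    mem_erase_of_ne_of_mem hB.ne_empty (mem_powerset_self _)
  obtain ⟨X, hX, hXmin⟩ := exists_min_image (B.powerset.erase ∅)
    (fun C ↦ ((#(C + A) : ℝ) / #C)) ⟨B, hB'⟩
  have hXB : X ⊆ B := mem_powerset.1 (mem_of_mem_erase hX)
  have hXne : X.Nonempty := nonempty_iff_ne_empty.2 (ne_of_mem_erase hX)
  have hXpos : (0 : ℝ) < #X := by exact_mod_cast card_pos.2 hXne
  have hkey : ∀ X' ⊆ X, #(X + A) * #X' ≤ #(X' + A) * #X := by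
    intro X' hX'
    obtain rfl | hX'ne := X'.eq_empty_or_nonempty
    · simp
    have hX'pos : (0 : ℝ) < #X' := by exact_mod_cast card_pos.2 hX'ne
    have hmem : X' ∈ B.powerset.erase ∅ :=
      mem_erase_of_ne_of_mem hX'ne.ne_empty (mem_powerset.2 (hX'.trans hXB))
    have := hXmin X' hmem
    have h2 : (#(X + A) : ℝ) * #X' ≤ (#(X' + A) : ℝ) * #X := by
      rw [div_le_div_iff₀ hXpos hX'pos] at this
      linarith
    exact_mod_cast h2
  -- the ratio is at most K
  have hratio : (#(X + A) : ℝ) / #X ≤ K := by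
    refine (hXmin B hB').trans ?_
    rw [div_le_iff₀ (by exact_mod_cast card_pos.2 hB)]
    rwa [add_comm B A]
  have hratio0 : (0 : ℝ) ≤ (#(X + A) : ℝ) / #X := by positivity
  -- main induction
  have main : ∀ n : ℕ, (#(X + n • A) : ℝ) ≤ ((#(X + A) : ℝ) / #X) ^ n * #X := by
    intro n
    induction n with
    | zero => simp
    | succ n ih =>
      have hpp := Finset.pluennecke_petridis_inequality_add (n • A) hkey
      have hpp' : (#(X + A + n • A) : ℝ) * #X ≤ (#(X + A) : ℝ) * #(X + n • A) := by
        rw [add_comm (n • A) X, add_right_comm] at hpp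
        exact_mod_cast hpp
      have heq : X + (n + 1) • A = X + A + n • A := by
        rw [succ_nsmul]; rw [add_assoc, add_comm (n • A) A, ← add_assoc]
      rw [heq]
      rw [← le_div_iff₀ hXpos] at hpp'
      refine hpp'.trans ?_
      calc (#(X + A) : ℝ) * #(X + n • A) / #X
          ≤ (#(X + A) : ℝ) * (((#(X + A) : ℝ) / #X) ^ n * #X) / #X := by gcongr
        _ = ((#(X + A) : ℝ) / #X) ^ (n + 1) * #X := by rw [pow_succ]; field_simp [hXpos.ne']
  refine ⟨X, hXB, hXne, fun n _ ↦ ?_⟩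
  rw [add_comm]
  calc (#(X + n • A) : ℝ) ≤ ((#(X + A) : ℝ) / #X) ^ n * #X := main n
    _ ≤ K ^ n * #X := by gcongr
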